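/- Suppose ε > 0, R > 0 and β ∈ ℂ. Let w, ψ : ℝ² → ℂ be smooth functions, not both identically zero on Ω, satisfying on Ω the system (1/R)·Δw + R·ψ_θ = β·(w − ε·Δw) and (1/R)·Δ²ψ − ε·R·Δ(w_θ) = β·(Δψ − ε·Δ²ψ), together with the boundary conditions w = 0, ψ = 0 and ∇ψ = 0 on ∂Ω. Then β is real (Im β = 0). -/

import Mathlib

open MeasureTheory Complex

noncomputable section

/-- Partial derivative with respect to the first (x) variable. -/
def pdx (f : ℝ × ℝ → ℂ) : ℝ × ℝ → ℂ := fun p => deriv (fun x => f (x, p.2)) p.1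

/-- Partial derivative with respect to the second (y) variable. -/
def pdy (f : ℝ × ℝ → ℂ) : ℝ × ℝ → ℂ := fun p => deriv (fun y => f (p.1, y)) p.2

/-- The Laplacian Δf = f_xx + f_yy. -/
def lap (f : ℝ × ℝ → ℂ) : ℝ × ℝ → ℂ := fun p => pdx (pdx f) p + pdy (pdy f) p

/-- The azimuthal derivative f_θ = x f_y − y f_x. -/
def azim (f : ℝ × ℝ → ℂ) : ℝ × ℝ → ℂ :=
  fun p => (p.1 : ℂ) * pdy f p - (p.2 : ℂ) * pdx f p

/-- The open unit disk Ω. -/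
def disk : Set (ℝ × ℝ) := {p | p.1 ^ 2 + p.2 ^ 2 < 1}

/-- The unit circle ∂Ω. -/
def bdry : Set (ℝ × ℝ) := {p | p.1 ^ 2 + p.2 ^ 2 = 1}

open Set Filter

lemma hasDerivAt_pdx {f : ℝ × ℝ → ℂ} (hf : Differentiable ℝ f) (p : ℝ × ℝ) :
    HasDerivAt (fun x => f (x, p.2)) (fderiv ℝ f p ((1:ℝ), (0:ℝ))) p.1 := by
  have h1 : HasDerivAt (fun x : ℝ => (x, p.2)) ((1:ℝ), (0:ℝ)) p.1 := by
    simpa using ((hasDerivAt_id p.1).prodMk (hasDerivAt_const p.1 p.2))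
  have := (hf p).hasFDerivAt.comp_hasDerivAt p.1 (by simpa using h1)
  exact this

lemma pdx_eq_fderiv {f : ℝ × ℝ → ℂ} (hf : Differentiable ℝ f) (p : ℝ × ℝ) :
    pdx f p = fderiv ℝ f p ((1:ℝ), (0:ℝ)) := (hasDerivAt_pdx hf p).deriv

lemma hasDerivAt_pdy {f : ℝ × ℝ → ℂ} (hf : Differentiable ℝ f) (p : ℝ × ℝ) :
    HasDerivAt (fun y => f (p.1, y)) (fderiv ℝ f p ((0:ℝ), (1:ℝ))) p.2 := by
  have h1 : HasDerivAt (fun y : ℝ => (p.1, y)) ((0:ℝ), (1:ℝ)) p.2 := by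
    simpa using ((hasDerivAt_const p.2 p.1).prodMk (hasDerivAt_id p.2))
  have := (hf p).hasFDerivAt.comp_hasDerivAt p.2 (by simpa using h1)
  exact this

lemma pdy_eq_fderiv {f : ℝ × ℝ → ℂ} (hf : Differentiable ℝ f) (p : ℝ × ℝ) :
    pdy f p = fderiv ℝ f p ((0:ℝ), (1:ℝ)) := (hasDerivAt_pdy hf p).deriv

lemma contDiff_pdx {f : ℝ × ℝ → ℂ} (hf : ContDiff ℝ (⊤:ℕ∞) f) : ContDiff ℝ (⊤:ℕ∞) (pdx f) := by
  have : pdx f = fun p => (fderiv ℝ f p) ((1:ℝ), (0:ℝ)) := by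
    funext p; exact pdx_eq_fderiv (hf.differentiable (by simp)) p
  rw [this]
  exact (hf.fderiv_right (by exact_mod_cast le_top)).clm_apply contDiff_const

lemma contDiff_pdy {f : ℝ × ℝ → ℂ} (hf : ContDiff ℝ (⊤:ℕ∞) f) : ContDiff ℝ (⊤:ℕ∞) (pdy f) := by
  have : pdy f = fun p => (fderiv ℝ f p) ((0:ℝ), (1:ℝ)) := by
    funext p; exact pdy_eq_fderiv (hf.differentiable (by simp)) p
  rw [this]
  exact (hf.fderiv_right (by exact_mod_cast le_top)).clm_apply contDiff_const

lemma pdx_pdy_comm {f : ℝ × ℝ → ℂ} (hf : ContDiff ℝ (⊤:ℕ∞) f) (p : ℝ × ℝ) :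
    pdx (pdy f) p = pdy (pdx f) p := by
  have hdf : Differentiable ℝ f := hf.differentiable (by simp)
  have hfd : ContDiff ℝ (⊤:ℕ∞) (fun q => fderiv ℝ f q) :=
    hf.fderiv_right (by exact_mod_cast le_top)
  have hdfd : Differentiable ℝ (fun q => fderiv ℝ f q) :=
    hfd.differentiable (by simp)
  have key : ∀ v u : ℝ × ℝ, fderiv ℝ (fun q => fderiv ℝ f q v) p u
      = fderiv ℝ (fderiv ℝ f) p u v := by
    intro v u
    rw [fderiv_clm_apply (hdfd p) (differentiableAt_const v)]
    simp
  have hsymm : ∀ v u : ℝ × ℝ, fderiv ℝ (fderiv ℝ f) p u v = fderiv ℝ (fderiv ℝ f) p v u := by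
    intro v u
    exact second_derivative_symmetric (fun y => (hdf y).hasFDerivAt) ((hdfd p).hasFDerivAt) u v
  have h1 : pdy f = fun q => fderiv ℝ f q ((0:ℝ),(1:ℝ)) := by
    funext q; exact pdy_eq_fderiv hdf q
  have h2 : pdx f = fun q => fderiv ℝ f q ((1:ℝ),(0:ℝ)) := by
    funext q; exact pdx_eq_fderiv hdf q
  rw [pdx_eq_fderiv (by rw [h1]; exact hfd.clm_apply contDiff_const |>.differentiable (by simp)) p,
      pdy_eq_fderiv (by rw [h2]; exact hfd.clm_apply contDiff_const |>.differentiable (by simp)) p]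
  rw [h1, h2, key, key, hsymm]

lemma contDiff_coordx : ContDiff ℝ (⊤:ℕ∞) (fun p : ℝ × ℝ => (p.1:ℂ)) :=
  Complex.ofRealCLM.contDiff.comp contDiff_fst

lemma contDiff_coordy : ContDiff ℝ (⊤:ℕ∞) (fun p : ℝ × ℝ => (p.2:ℂ)) :=
  Complex.ofRealCLM.contDiff.comp contDiff_snd

lemma sliceX {u : ℝ × ℝ → ℂ} (hu : ContDiff ℝ (⊤:ℕ∞) u) (y : ℝ) :
    Differentiable ℝ (fun x => u (x, y)) :=
  (hu.comp ((contDiff_id (E := ℝ)).prodMk contDiff_const)).differentiable (by simp)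

lemma sliceY {u : ℝ × ℝ → ℂ} (hu : ContDiff ℝ (⊤:ℕ∞) u) (x : ℝ) :
    Differentiable ℝ (fun y => u (x, y)) :=
  (hu.comp (contDiff_const.prodMk (contDiff_id (E := ℝ)))).differentiable (by simp)

lemma pdx_add {a b : ℝ × ℝ → ℂ} (ha : ContDiff ℝ (⊤:ℕ∞) a) (hb : ContDiff ℝ (⊤:ℕ∞) b)
    (p : ℝ × ℝ) : pdx (fun q => a q + b q) p = pdx a p + pdx b p :=
  deriv_add ((sliceX ha p.2) p.1) ((sliceX hb p.2) p.1)

lemma pdx_sub {a b : ℝ × ℝ → ℂ} (ha : ContDiff ℝ (⊤:ℕ∞) a) (hb : ContDiff ℝ (⊤:ℕ∞) b)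
    (p : ℝ × ℝ) : pdx (fun q => a q - b q) p = pdx a p - pdx b p :=
  deriv_sub ((sliceX ha p.2) p.1) ((sliceX hb p.2) p.1)

lemma pdy_add {a b : ℝ × ℝ → ℂ} (ha : ContDiff ℝ (⊤:ℕ∞) a) (hb : ContDiff ℝ (⊤:ℕ∞) b)
    (p : ℝ × ℝ) : pdy (fun q => a q + b q) p = pdy a p + pdy b p :=
  deriv_add ((sliceY ha p.1) p.2) ((sliceY hb p.1) p.2)

lemma pdy_sub {a b : ℝ × ℝ → ℂ} (ha : ContDiff ℝ (⊤:ℕ∞) a) (hb : ContDiff ℝ (⊤:ℕ∞) b)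
    (p : ℝ × ℝ) : pdy (fun q => a q - b q) p = pdy a p - pdy b p :=
  deriv_sub ((sliceY ha p.1) p.2) ((sliceY hb p.1) p.2)

lemma pdx_mul {a b : ℝ × ℝ → ℂ} (ha : ContDiff ℝ (⊤:ℕ∞) a) (hb : ContDiff ℝ (⊤:ℕ∞) b)
    (p : ℝ × ℝ) : pdx (fun q => a q * b q) p = pdx a p * b p + a p * pdx b p :=
  deriv_mul ((sliceX ha p.2) p.1) ((sliceX hb p.2) p.1)

lemma pdy_mul {a b : ℝ × ℝ → ℂ} (ha : ContDiff ℝ (⊤:ℕ∞) a) (hb : ContDiff ℝ (⊤:ℕ∞) b)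
    (p : ℝ × ℝ) : pdy (fun q => a q * b q) p = pdy a p * b p + a p * pdy b p :=
  deriv_mul ((sliceY ha p.1) p.2) ((sliceY hb p.1) p.2)

lemma pdx_coordx (p : ℝ × ℝ) : pdx (fun q : ℝ × ℝ => (q.1:ℂ)) p = 1 := by
  have : HasDerivAt (fun x : ℝ => (x:ℂ)) 1 p.1 := by
    exact Complex.ofRealCLM.hasDerivAt (x := p.1)
  exact this.deriv

lemma pdx_coordy (p : ℝ × ℝ) : pdx (fun q : ℝ × ℝ => (q.2:ℂ)) p = 0 := by
  simp [pdx]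

lemma pdy_coordx (p : ℝ × ℝ) : pdy (fun q : ℝ × ℝ => (q.1:ℂ)) p = 0 := by
  simp [pdy]

lemma pdy_coordy (p : ℝ × ℝ) : pdy (fun q : ℝ × ℝ => (q.2:ℂ)) p = 1 := by
  have : HasDerivAt (fun y : ℝ => (y:ℂ)) 1 p.2 := by
    exact Complex.ofRealCLM.hasDerivAt (x := p.2)
  exact this.deriv

lemma contDiff_azim {f : ℝ × ℝ → ℂ} (hf : ContDiff ℝ (⊤:ℕ∞) f) :
    ContDiff ℝ (⊤:ℕ∞) (azim f) :=
  (contDiff_coordx.mul (contDiff_pdy hf)).sub (contDiff_coordy.mul (contDiff_pdx hf))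

lemma contDiff_lap {f : ℝ × ℝ → ℂ} (hf : ContDiff ℝ (⊤:ℕ∞) f) :
    ContDiff ℝ (⊤:ℕ∞) (lap f) :=
  (contDiff_pdx (contDiff_pdx hf)).add (contDiff_pdy (contDiff_pdy hf))

lemma pdx_pdy_comm' {f : ℝ × ℝ → ℂ} (hf : ContDiff ℝ (⊤:ℕ∞) f) :
    pdx (pdy f) = pdy (pdx f) := funext (pdx_pdy_comm hf)

lemma pdx_azim {f : ℝ × ℝ → ℂ} (hf : ContDiff ℝ (⊤:ℕ∞) f) (p : ℝ × ℝ) :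
    pdx (azim f) p = pdy f p + (p.1:ℂ) * pdx (pdy f) p - (p.2:ℂ) * pdx (pdx f) p := by
  have h : azim f = fun q => (fun q : ℝ × ℝ => (q.1:ℂ) * pdy f q) q
      - (fun q : ℝ × ℝ => (q.2:ℂ) * pdx f q) q := rfl
  rw [h, pdx_sub (contDiff_coordx.mul (contDiff_pdy hf)) (contDiff_coordy.mul (contDiff_pdx hf)),
    pdx_mul contDiff_coordx (contDiff_pdy hf), pdx_mul contDiff_coordy (contDiff_pdx hf),
    pdx_coordx, pdx_coordy]
  ring

lemma pdy_azim {f : ℝ × ℝ → ℂ} (hf : ContDiff ℝ (⊤:ℕ∞) f) (p : ℝ × ℝ) :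
    pdy (azim f) p = (p.1:ℂ) * pdy (pdy f) p - pdx f p - (p.2:ℂ) * pdy (pdx f) p := by
  have h : azim f = fun q => (fun q : ℝ × ℝ => (q.1:ℂ) * pdy f q) q
      - (fun q : ℝ × ℝ => (q.2:ℂ) * pdx f q) q := rfl
  rw [h, pdy_sub (contDiff_coordx.mul (contDiff_pdy hf)) (contDiff_coordy.mul (contDiff_pdx hf)),
    pdy_mul contDiff_coordx (contDiff_pdy hf), pdy_mul contDiff_coordy (contDiff_pdx hf),
    pdy_coordx, pdy_coordy]
  ring

lemma lap_azim {f : ℝ × ℝ → ℂ} (hf : ContDiff ℝ (⊤:ℕ∞) f) (p : ℝ × ℝ) :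
    lap (azim f) p = azim (lap f) p := by
  have hpx := contDiff_pdx hf
  have hpy := contDiff_pdy hf
  have e1 : pdx (azim f) = fun q => (fun q => pdy f q + (fun q : ℝ × ℝ => (q.1:ℂ) * pdx (pdy f) q) q) q
      - (fun q : ℝ × ℝ => (q.2:ℂ) * pdx (pdx f) q) q := by
    funext q
    simpa using pdx_azim hf q
  have e2 : pdy (azim f) = fun q => (fun q => (fun q : ℝ × ℝ => (q.1:ℂ) * pdy (pdy f) q) q - pdx f q) q
      - (fun q : ℝ × ℝ => (q.2:ℂ) * pdy (pdx f) q) q := by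
    funext q
    rw [pdy_azim hf q]
  have c1 : ContDiff ℝ (⊤:ℕ∞) (fun q : ℝ × ℝ => (q.1:ℂ) * pdx (pdy f) q) :=
    contDiff_coordx.mul (contDiff_pdx hpy)
  have c2 : ContDiff ℝ (⊤:ℕ∞) (fun q : ℝ × ℝ => (q.2:ℂ) * pdx (pdx f) q) :=
    contDiff_coordy.mul (contDiff_pdx hpx)
  have c3 : ContDiff ℝ (⊤:ℕ∞) (fun q : ℝ × ℝ => (q.1:ℂ) * pdy (pdy f) q) :=
    contDiff_coordx.mul (contDiff_pdy hpy)
  have c4 : ContDiff ℝ (⊤:ℕ∞) (fun q : ℝ × ℝ => (q.2:ℂ) * pdy (pdx f) q) :=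
    contDiff_coordy.mul (contDiff_pdy hpx)
  have hxx : lap (azim f) p = pdx (pdx (azim f)) p + pdy (pdy (azim f)) p := rfl
  rw [hxx, e1, e2]
  rw [pdx_sub (hpy.add c1) c2, pdx_add hpy c1, pdx_mul contDiff_coordx (contDiff_pdx hpy),
    pdx_mul contDiff_coordy (contDiff_pdx hpx), pdx_coordx, pdx_coordy]
  rw [pdy_sub (c3.sub hpx) c4, pdy_sub c3 hpx, pdy_mul contDiff_coordx (contDiff_pdy hpy),
    pdy_mul contDiff_coordy (contDiff_pdy hpx), pdy_coordx, pdy_coordy]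
  have comm1 : pdx (pdy f) = pdy (pdx f) := pdx_pdy_comm' hf
  have comm2 : pdx (pdy (pdy f)) = pdy (pdx (pdy f)) := pdx_pdy_comm' hpy
  have comm3 : pdy (pdx (pdx f)) = pdx (pdy (pdx f)) := (pdx_pdy_comm' hpx).symm
  have : azim (lap f) p = (p.1:ℂ) * pdy (lap f) p - (p.2:ℂ) * pdx (lap f) p := rfl
  rw [this]
  have e3 : lap f = fun q => (fun q => pdx (pdx f) q) q + (fun q => pdy (pdy f) q) q := rfl
  rw [e3, pdy_add (contDiff_pdx hpx) (contDiff_pdy hpy),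
    pdx_add (contDiff_pdx hpx) (contDiff_pdy hpy)]
  rw [comm2, comm1, ← comm3]
  ring

lemma contDiff_conj {f : ℝ × ℝ → ℂ} (hf : ContDiff ℝ (⊤:ℕ∞) f) :
    ContDiff ℝ (⊤:ℕ∞) (fun q => (starRingEnd ℂ) (f q)) :=
  Complex.conjCLE.toContinuousLinearMap.contDiff.comp hf

lemma pdx_conj {f : ℝ × ℝ → ℂ} (hf : ContDiff ℝ (⊤:ℕ∞) f) (p : ℝ × ℝ) :
    pdx (fun q => (starRingEnd ℂ) (f q)) p = (starRingEnd ℂ) (pdx f p) := by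
  have h := ((sliceX hf p.2) p.1).hasDerivAt
  have h2 : HasDerivAt (fun x => (starRingEnd ℂ) (f (x, p.2)))
      ((starRingEnd ℂ) (deriv (fun x => f (x, p.2)) p.1)) p.1 := by
    have := Complex.conjCLE.toContinuousLinearMap.hasFDerivAt.comp_hasDerivAt p.1 h
    exact this
  exact h2.deriv

lemma pdy_conj {f : ℝ × ℝ → ℂ} (hf : ContDiff ℝ (⊤:ℕ∞) f) (p : ℝ × ℝ) :
    pdy (fun q => (starRingEnd ℂ) (f q)) p = (starRingEnd ℂ) (pdy f p) := by
  have h := ((sliceY hf p.1) p.2).hasDerivAt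
  have h2 : HasDerivAt (fun y => (starRingEnd ℂ) (f (p.1, y)))
      ((starRingEnd ℂ) (deriv (fun y => f (p.1, y)) p.2)) p.2 := by
    have := Complex.conjCLE.toContinuousLinearMap.hasFDerivAt.comp_hasDerivAt p.2 h
    exact this
  exact h2.deriv

lemma isOpen_disk : IsOpen disk := by
  have : disk = (fun p : ℝ × ℝ => p.1 ^ 2 + p.2 ^ 2) ⁻¹' (Set.Iio 1) := rfl
  rw [this]
  exact (((continuous_fst.pow 2).add (continuous_snd.pow 2))).isOpen_preimage _ isOpen_Iio

lemma disk_subset_ball : disk ⊆ Metric.closedBall (0 : ℝ × ℝ) 1 := by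
  intro p hp
  have h1 : p.1 ^ 2 + p.2 ^ 2 < 1 := hp
  have h2 : |p.1| ≤ 1 := by nlinarith [abs_nonneg p.1, _root_.sq_abs p.1, _root_.sq_abs p.2, sq_nonneg p.2]
  have h3 : |p.2| ≤ 1 := by nlinarith [abs_nonneg p.2, _root_.sq_abs p.1, _root_.sq_abs p.2, sq_nonneg p.1]
  rw [Metric.mem_closedBall, dist_zero_right, Prod.norm_def]
  simp only [Real.norm_eq_abs, sup_le_iff]
  exact ⟨h2, h3⟩

lemma integrableOn_disk {E : Type*} [NormedAddCommGroup E] {f : ℝ × ℝ → E}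
    (hf : Continuous f) : IntegrableOn f disk := by
  exact (hf.continuousOn.integrableOn_compact (isCompact_closedBall (0:ℝ×ℝ) 1)).mono_set disk_subset_ball

lemma integral_pdx_eq_zero {h : ℝ × ℝ → ℂ} (hh : ContDiff ℝ (⊤:ℕ∞) h)
    (hbc : ∀ p ∈ bdry, h p = 0) : ∫ p in disk, pdx h p = 0 := by
  have hcont : Continuous (pdx h) := (contDiff_pdx hh).continuous
  have hint : Integrable (disk.indicator (pdx h)) := by
    rw [integrable_indicator_iff isOpen_disk.measurableSet]
    exact integrableOn_disk hcont
  rw [← integral_indicator isOpen_disk.measurableSet]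
  rw [Measure.volume_eq_prod] at hint ⊢
  rw [integral_prod_symm _ hint]
  have inner : ∀ y : ℝ, (∫ x : ℝ, disk.indicator (pdx h) (x, y)) = 0 := by
    intro y
    by_cases hy : y ^ 2 < 1
    · set a := Real.sqrt (1 - y ^ 2) with ha
      have ha2 : a ^ 2 = 1 - y ^ 2 := Real.sq_sqrt (by linarith)
      have hapos : 0 < a := Real.sqrt_pos.mpr (by linarith)
      have hset : (fun x => disk.indicator (pdx h) (x, y))
          = (Ioo (-a) a).indicator (fun x => pdx h (x, y)) := by
        funext x
        have : (x, y) ∈ disk ↔ x ∈ Ioo (-a) a := by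
          simp only [disk, mem_setOf_eq, mem_Ioo]
          constructor
          · intro hx
            have h1 : x ^ 2 < a ^ 2 := by rw [ha2]; linarith
            exact abs_lt_of_sq_lt_sq' h1 hapos.le
          · intro ⟨h1, h2⟩
            nlinarith
        by_cases hmem : (x, y) ∈ disk
        · rw [Set.indicator_of_mem hmem, Set.indicator_of_mem (this.mp hmem)]
        · rw [Set.indicator_of_notMem hmem, Set.indicator_of_notMem (fun c => hmem (this.mpr c))]
      rw [hset, integral_indicator measurableSet_Ioo]
      rw [← integral_Ioc_eq_integral_Ioo, ← intervalIntegral.integral_of_le (by linarith)]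
      have hftc : ∫ x in (-a)..a, pdx h (x, y) = h (a, y) - h (-a, y) := by
        show ∫ x in (-a)..a, deriv (fun x' => h (x', y)) x = _
        apply intervalIntegral.integral_deriv_eq_sub
        · intro x _
          exact (sliceX hh y) x
        · exact (hcont.comp (continuous_id.prodMk continuous_const)).intervalIntegrable _ _
      rw [hftc, hbc (a, y) (by simp [bdry]; linarith), hbc (-a, y) (by simp [bdry]; nlinarith)]
      simp
    · have hset : (fun x => disk.indicator (pdx h) (x, y)) = fun _ => 0 := by
        funext x
        apply Set.indicator_of_notMem
        simp only [disk, mem_setOf_eq, not_lt]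
        nlinarith
      rw [hset]
      simp
  simp only [inner]
  simp

lemma integral_pdy_eq_zero {h : ℝ × ℝ → ℂ} (hh : ContDiff ℝ (⊤:ℕ∞) h)
    (hbc : ∀ p ∈ bdry, h p = 0) : ∫ p in disk, pdy h p = 0 := by
  have hcont : Continuous (pdy h) := (contDiff_pdy hh).continuous
  have hint : Integrable (disk.indicator (pdy h)) := by
    rw [integrable_indicator_iff isOpen_disk.measurableSet]
    exact integrableOn_disk hcont
  rw [← integral_indicator isOpen_disk.measurableSet]
  rw [Measure.volume_eq_prod] at hint ⊢
  rw [integral_prod _ hint]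
  have inner : ∀ x : ℝ, (∫ y : ℝ, disk.indicator (pdy h) (x, y)) = 0 := by
    intro x
    by_cases hx : x ^ 2 < 1
    · set a := Real.sqrt (1 - x ^ 2) with ha
      have ha2 : a ^ 2 = 1 - x ^ 2 := Real.sq_sqrt (by linarith)
      have hapos : 0 < a := Real.sqrt_pos.mpr (by linarith)
      have hset : (fun y => disk.indicator (pdy h) (x, y))
          = (Ioo (-a) a).indicator (fun y => pdy h (x, y)) := by
        funext y
        have : (x, y) ∈ disk ↔ y ∈ Ioo (-a) a := by
          simp only [disk, mem_setOf_eq, mem_Ioo]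
          constructor
          · intro hpt
            have h1 : y ^ 2 < a ^ 2 := by rw [ha2]; linarith
            exact abs_lt_of_sq_lt_sq' h1 hapos.le
          · intro ⟨h1, h2⟩
            nlinarith
        by_cases hmem : (x, y) ∈ disk
        · rw [Set.indicator_of_mem hmem, Set.indicator_of_mem (this.mp hmem)]
        · rw [Set.indicator_of_notMem hmem, Set.indicator_of_notMem (fun c => hmem (this.mpr c))]
      rw [hset, integral_indicator measurableSet_Ioo]
      rw [← integral_Ioc_eq_integral_Ioo, ← intervalIntegral.integral_of_le (by linarith)]
      have hftc : ∫ y in (-a)..a, pdy h (x, y) = h (x, a) - h (x, -a) := by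
        show ∫ y in (-a)..a, deriv (fun y' => h (x, y')) y = _
        apply intervalIntegral.integral_deriv_eq_sub
        · intro y _
          exact (sliceY hh x) y
        · exact (hcont.comp (continuous_const.prodMk continuous_id)).intervalIntegrable _ _
      rw [hftc, hbc (x, a) (by simp [bdry]; linarith), hbc (x, -a) (by simp [bdry]; nlinarith)]
      simp
    · have hset : (fun y => disk.indicator (pdy h) (x, y)) = fun _ => 0 := by
        funext y
        apply Set.indicator_of_notMem
        simp only [disk, mem_setOf_eq, not_lt]
        nlinarith
      rw [hset]
      simp
  simp only [inner]
  simp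

lemma hasDerivAt_circle {h : ℝ × ℝ → ℂ} (hh : ContDiff ℝ (⊤:ℕ∞) h) (r θ : ℝ) :
    HasDerivAt (fun t => h (r * Real.cos t, r * Real.sin t))
      (azim h (r * Real.cos θ, r * Real.sin θ)) θ := by
  have hdiff : Differentiable ℝ h := hh.differentiable (by simp)
  set pt : ℝ × ℝ := (r * Real.cos θ, r * Real.sin θ) with hpt
  have hc : HasDerivAt (fun t => ((r * Real.cos t, r * Real.sin t) : ℝ × ℝ))
      ((-(r * Real.sin θ), r * Real.cos θ) : ℝ × ℝ) θ := by
    apply HasDerivAt.prodMk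
    · simpa [mul_comm] using (Real.hasDerivAt_cos θ).const_mul r
    · simpa [mul_comm] using (Real.hasDerivAt_sin θ).const_mul r
  have := (hdiff pt).hasFDerivAt.comp_hasDerivAt θ hc
  refine this.congr_deriv (Eq.symm ?_)
  have hvec : ((-(r * Real.sin θ), r * Real.cos θ) : ℝ × ℝ)
      = (-(r * Real.sin θ)) • ((1:ℝ), (0:ℝ)) + (r * Real.cos θ) • ((0:ℝ), (1:ℝ)) := by
    simp [Prod.ext_iff]
  rw [hvec, map_add, _root_.map_smul, _root_.map_smul, ← pdx_eq_fderiv hdiff, ← pdy_eq_fderiv hdiff]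
  simp only [azim, hpt]
  push_cast
  simp [Complex.real_smul]
  ring

lemma integral_azim_eq_zero {h : ℝ × ℝ → ℂ} (hh : ContDiff ℝ (⊤:ℕ∞) h) :
    ∫ p in disk, azim h p = 0 := by
  have hcont : Continuous (azim h) := (contDiff_azim hh).continuous
  set f : ℝ × ℝ → ℂ := disk.indicator (azim h) with hf
  have h0 : ∫ p in disk, azim h p = ∫ p, f p := by
    rw [hf, integral_indicator isOpen_disk.measurableSet]
  rw [h0, ← integral_comp_polarCoord_symm f]
  set G : ℝ × ℝ → ℂ := fun q => (q.1 : ℂ) * azim h (q.1 * Real.cos q.2, q.1 * Real.sin q.2)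
    with hG
  have hGcont : Continuous G := by
    apply Continuous.mul
    · exact Complex.continuous_ofReal.comp continuous_fst
    · exact hcont.comp ((continuous_fst.mul (Real.continuous_cos.comp continuous_snd)).prodMk
        (continuous_fst.mul (Real.continuous_sin.comp continuous_snd)))
  have hind : (fun q => (polarCoord.target.indicator
      (fun q : ℝ × ℝ => q.1 • f (polarCoord.symm q)) q))
      = (Ioo (0:ℝ) 1 ×ˢ Ioo (-Real.pi) Real.pi).indicator G := by
    funext q
    have hsymm : polarCoord.symm q = (q.1 * Real.cos q.2, q.1 * Real.sin q.2) := rfl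
    have htar : polarCoord.target = Ioi (0:ℝ) ×ˢ Ioo (-Real.pi) Real.pi := rfl
    by_cases hq : q ∈ polarCoord.target
    · rw [Set.indicator_of_mem hq]
      have hq1 : 0 < q.1 := by
        rw [htar] at hq; exact hq.1
      have hdisk : polarCoord.symm q ∈ disk ↔ q.1 < 1 := by
        rw [hsymm]
        simp only [disk, mem_setOf_eq]
        constructor
        · intro hlt
          nlinarith [Real.sin_sq_add_cos_sq q.2, sq_nonneg q.1]
        · intro hlt
          have hq1sq : q.1 ^ 2 < 1 := by nlinarith
          nlinarith [Real.sin_sq_add_cos_sq q.2, sq_nonneg q.1]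
      by_cases hq2 : q.1 < 1
      · rw [Set.indicator_of_mem, hf, Set.indicator_of_mem (hdisk.mpr hq2), hsymm]
        · simp [hG, Complex.real_smul]
        · rw [htar] at hq
          exact ⟨⟨hq1, hq2⟩, hq.2⟩
      · rw [Set.indicator_of_notMem, hf, Set.indicator_of_notMem]
        · simp
        · rw [hdisk]; exact hq2
        · intro hc
          exact hq2 hc.1.2
    · rw [Set.indicator_of_notMem hq, Set.indicator_of_notMem]
      intro hc
      apply hq
      rw [htar]
      exact ⟨mem_Ioi.mpr hc.1.1, hc.2⟩
  have hGint : IntegrableOn G (Ioo (0:ℝ) 1 ×ˢ Ioo (-Real.pi) Real.pi) :=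
    (hGcont.continuousOn.integrableOn_compact
      ((isCompact_Icc (a := (0:ℝ)) (b := 1)).prod
        (isCompact_Icc (a := -Real.pi) (b := Real.pi)))).mono_set
      (Set.prod_mono Set.Ioo_subset_Icc_self Set.Ioo_subset_Icc_self)
  rw [← integral_indicator polarCoord.open_target.measurableSet, hind,
    integral_indicator (measurableSet_Ioo.prod measurableSet_Ioo)]
  rw [Measure.volume_eq_prod] at hGint ⊢
  rw [setIntegral_prod _ hGint]
  have inner : ∀ r : ℝ, (∫ t in Ioo (-Real.pi) Real.pi, G (r, t)) = 0 := by
    intro r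
    have hfun : (fun t => G (r, t)) = fun t => (r:ℂ) * azim h (r * Real.cos t, r * Real.sin t) :=
      rfl
    rw [hfun, ← integral_Ioc_eq_integral_Ioo,
      ← intervalIntegral.integral_of_le (by linarith [Real.pi_pos])]
    have hftc : ∫ t in (-Real.pi)..Real.pi, azim h (r * Real.cos t, r * Real.sin t)
        = h (r * Real.cos Real.pi, r * Real.sin Real.pi)
          - h (r * Real.cos (-Real.pi), r * Real.sin (-Real.pi)) := by
      exact intervalIntegral.integral_eq_sub_of_hasDerivAt
        (f := fun t => h (r * Real.cos t, r * Real.sin t))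
        (fun t _ => hasDerivAt_circle hh r t)
        ((hcont.comp ((continuous_const.mul Real.continuous_cos).prodMk
          (continuous_const.mul Real.continuous_sin))).intervalIntegrable _ _)
    rw [intervalIntegral.integral_const_mul, hftc]
    simp
  simp only [inner]
  simp



lemma azim_mul {a b : ℝ × ℝ → ℂ} (ha : ContDiff ℝ (⊤:ℕ∞) a) (hb : ContDiff ℝ (⊤:ℕ∞) b)
    (p : ℝ × ℝ) : azim (fun q => a q * b q) p = azim a p * b p + a p * azim b p := by
  simp only [azim, pdx_mul ha hb, pdy_mul ha hb]
  ring

lemma lap_conj {f : ℝ × ℝ → ℂ} (hf : ContDiff ℝ (⊤:ℕ∞) f) (p : ℝ × ℝ) :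
    lap (fun q => (starRingEnd ℂ) (f q)) p = (starRingEnd ℂ) (lap f p) := by
  have e1 : pdx (fun q => (starRingEnd ℂ) (f q)) = fun q => (starRingEnd ℂ) (pdx f q) :=
    funext (pdx_conj hf)
  have e2 : pdy (fun q => (starRingEnd ℂ) (f q)) = fun q => (starRingEnd ℂ) (pdy f q) :=
    funext (pdy_conj hf)
  simp only [lap, e1, e2, pdx_conj (contDiff_pdx hf), pdy_conj (contDiff_pdy hf), map_add]

lemma azim_conj {f : ℝ × ℝ → ℂ} (hf : ContDiff ℝ (⊤:ℕ∞) f) (p : ℝ × ℝ) :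
    azim (fun q => (starRingEnd ℂ) (f q)) p = (starRingEnd ℂ) (azim f p) := by
  simp only [azim, pdx_conj hf, pdy_conj hf, map_sub, map_mul, Complex.conj_ofReal]

lemma ibp_x {f g : ℝ × ℝ → ℂ} (hf : ContDiff ℝ (⊤:ℕ∞) f) (hg : ContDiff ℝ (⊤:ℕ∞) g)
    (h0 : ∀ p ∈ bdry, f p * g p = 0) :
    ∫ p in disk, pdx f p * g p = -∫ p in disk, f p * pdx g p := by
  have key := integral_pdx_eq_zero (hf.mul hg) h0
  have e : pdx (fun q => f q * g q) = fun p => pdx f p * g p + f p * pdx g p :=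
    funext (pdx_mul hf hg)
  rw [e, integral_add (f := fun p => pdx f p * g p) (g := fun p => f p * pdx g p) (integrableOn_disk (((contDiff_pdx hf).continuous.mul hg.continuous)))
    (integrableOn_disk (hf.continuous.mul (contDiff_pdx hg).continuous))] at key
  exact eq_neg_of_add_eq_zero_left key

lemma ibp_y {f g : ℝ × ℝ → ℂ} (hf : ContDiff ℝ (⊤:ℕ∞) f) (hg : ContDiff ℝ (⊤:ℕ∞) g)
    (h0 : ∀ p ∈ bdry, f p * g p = 0) :
    ∫ p in disk, pdy f p * g p = -∫ p in disk, f p * pdy g p := by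
  have key := integral_pdy_eq_zero (hf.mul hg) h0
  have e : pdy (fun q => f q * g q) = fun p => pdy f p * g p + f p * pdy g p :=
    funext (pdy_mul hf hg)
  rw [e, integral_add (f := fun p => pdy f p * g p) (g := fun p => f p * pdy g p) (integrableOn_disk (((contDiff_pdy hf).continuous.mul hg.continuous)))
    (integrableOn_disk (hf.continuous.mul (contDiff_pdy hg).continuous))] at key
  exact eq_neg_of_add_eq_zero_left key

lemma ibp_azim {f g : ℝ × ℝ → ℂ} (hf : ContDiff ℝ (⊤:ℕ∞) f) (hg : ContDiff ℝ (⊤:ℕ∞) g) :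
    ∫ p in disk, azim f p * g p = -∫ p in disk, f p * azim g p := by
  have key := integral_azim_eq_zero (hf.mul hg)
  have e : azim (fun q => f q * g q) = fun p => azim f p * g p + f p * azim g p :=
    funext (azim_mul hf hg)
  rw [e, integral_add (f := fun p => azim f p * g p) (g := fun p => f p * azim g p) (integrableOn_disk (((contDiff_azim hf).continuous.mul hg.continuous)))
    (integrableOn_disk (hf.continuous.mul (contDiff_azim hg).continuous))] at key
  exact eq_neg_of_add_eq_zero_left key

lemma green {F g : ℝ × ℝ → ℂ} (hF : ContDiff ℝ (⊤:ℕ∞) F) (hg : ContDiff ℝ (⊤:ℕ∞) g)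
    (h0 : ∀ p ∈ bdry, g p = 0) :
    ∫ p in disk, lap F p * g p
      = -(∫ p in disk, pdx F p * pdx g p) - ∫ p in disk, pdy F p * pdy g p := by
  have e : (fun p => lap F p * g p)
      = fun p => pdx (pdx F) p * g p + pdy (pdy F) p * g p := by
    funext p; simp only [lap]; ring
  rw [e, integral_add (f := fun p => pdx (pdx F) p * g p) (g := fun p => pdy (pdy F) p * g p) (integrableOn_disk ((contDiff_pdx (contDiff_pdx hF)).continuous.mul
      hg.continuous))
    (integrableOn_disk ((contDiff_pdy (contDiff_pdy hF)).continuous.mul hg.continuous)),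
    ibp_x (contDiff_pdx hF) hg (fun p hp => by rw [h0 p hp, mul_zero]),
    ibp_y (contDiff_pdy hF) hg (fun p hp => by rw [h0 p hp, mul_zero])]
  ring

lemma nrm_eq {u : ℝ × ℝ → ℂ} :
    ∫ p in disk, u p * (starRingEnd ℂ) (u p)
      = ((∫ p in disk, Complex.normSq (u p) : ℝ) : ℂ) := by
  have e : (fun p => u p * (starRingEnd ℂ) (u p))
      = fun p => ((Complex.normSq (u p) : ℝ) : ℂ) := by
    funext p; exact Complex.mul_conj (u p)
  rw [e]
  rw [show (fun p => ((Complex.normSq (u p) : ℝ) : ℂ)) = fun p => (RCLike.ofReal (K := ℂ)) (Complex.normSq (u p)) from rfl]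
  exact integral_ofReal

lemma nrm_nonneg {u : ℝ × ℝ → ℂ} : 0 ≤ ∫ p in disk, Complex.normSq (u p) :=
  setIntegral_nonneg isOpen_disk.measurableSet (fun p _ => Complex.normSq_nonneg _)

lemma zero_of_nrm_zero {u : ℝ × ℝ → ℂ} (hu : Continuous u)
    (h0 : ∫ p in disk, Complex.normSq (u p) = 0) : ∀ p ∈ disk, u p = 0 := by
  have hint : IntegrableOn (fun p => Complex.normSq (u p)) disk :=
    integrableOn_disk (Complex.continuous_normSq.comp hu)
  have hae : (fun p => Complex.normSq (u p)) =ᵐ[volume.restrict disk] 0 :=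
    (setIntegral_eq_zero_iff_of_nonneg_ae
      (Filter.Eventually.of_forall (fun p => Complex.normSq_nonneg _)) hint).mp h0
  have heq : EqOn (fun p => Complex.normSq (u p)) 0 disk := by
    apply Measure.eqOn_of_ae_eq hae
      (Complex.continuous_normSq.comp hu).continuousOn continuousOn_const
    rw [isOpen_disk.interior_eq]
    exact subset_closure
  intro p hp
  exact Complex.normSq_eq_zero.mp (heq hp)




set_option maxHeartbeats 1000000 in
/-- Every eigenvalue of the linearized second grade Poiseuille problem is real. -/
theorem eigenvalues_are_real (ε R : ℝ) (hε : 0 < ε) (hR : 0 < R) (β : ℂ)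
    (w ψ : ℝ × ℝ → ℂ) (hw : ContDiff ℝ (⊤ : ℕ∞) w) (hψ : ContDiff ℝ (⊤ : ℕ∞) ψ)
    (hnz : ¬ ∀ p ∈ disk, w p = 0 ∧ ψ p = 0)
    (heq1 : ∀ p ∈ disk,
      (1 / (R : ℂ)) * lap w p + (R : ℂ) * azim ψ p = β * (w p - (ε : ℂ) * lap w p))
    (heq2 : ∀ p ∈ disk,
      (1 / (R : ℂ)) * lap (lap ψ) p - (ε : ℂ) * (R : ℂ) * lap (azim w) p
        = β * (lap ψ p - (ε : ℂ) * lap (lap ψ) p))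
    (hbc : ∀ p ∈ bdry, w p = 0 ∧ ψ p = 0 ∧ pdx ψ p = 0 ∧ pdy ψ p = 0) :
    β.im = 0 := by
  by_contra hβ
  have hLw : ContDiff ℝ (⊤:ℕ∞) (lap w) := contDiff_lap hw
  have hLψ : ContDiff ℝ (⊤:ℕ∞) (lap ψ) := contDiff_lap hψ
  set N2w := ∫ p in disk, Complex.normSq (lap w p) with hN2w
  set Nxw := ∫ p in disk, Complex.normSq (pdx w p) with hNxw
  set Nyw := ∫ p in disk, Complex.normSq (pdy w p) with hNyw
  set Nxψ := ∫ p in disk, Complex.normSq (pdx ψ p) with hNxψ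
  set Nyψ := ∫ p in disk, Complex.normSq (pdy ψ p) with hNyψ
  set N2ψ := ∫ p in disk, Complex.normSq (lap ψ p) with hN2ψ
  set X := ∫ p in disk, azim ψ p * (starRingEnd ℂ) (lap w p) with hX
  -- ## Equation (III) : eq1 against conj (lap w)
  have hstep3 : ∫ p in disk, ((1/(R:ℂ)) * (lap w p * (starRingEnd ℂ) (lap w p))
        + (R:ℂ) * (azim ψ p * (starRingEnd ℂ) (lap w p)))
      = ∫ p in disk, β * (w p * (starRingEnd ℂ) (lap w p)
        - (ε:ℂ) * (lap w p * (starRingEnd ℂ) (lap w p))) := by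
    apply setIntegral_congr_fun isOpen_disk.measurableSet
    intro p hp
    have h := heq1 p hp
    calc (1/(R:ℂ)) * (lap w p * (starRingEnd ℂ) (lap w p))
          + (R:ℂ) * (azim ψ p * (starRingEnd ℂ) (lap w p))
        = ((1/(R:ℂ)) * lap w p + (R:ℂ) * azim ψ p) * (starRingEnd ℂ) (lap w p) := by ring
      _ = (β * (w p - (ε:ℂ) * lap w p)) * (starRingEnd ℂ) (lap w p) := by rw [h]
      _ = β * (w p * (starRingEnd ℂ) (lap w p)
          - (ε:ℂ) * (lap w p * (starRingEnd ℂ) (lap w p))) := by ring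
  have int_LcL : IntegrableOn (fun p => lap w p * (starRingEnd ℂ) (lap w p)) disk :=
    integrableOn_disk (hLw.continuous.mul (Complex.continuous_conj.comp hLw.continuous))
  have int_AcL : IntegrableOn (fun p => azim ψ p * (starRingEnd ℂ) (lap w p)) disk :=
    integrableOn_disk ((contDiff_azim hψ).continuous.mul
      (Complex.continuous_conj.comp hLw.continuous))
  have int_wcL : IntegrableOn (fun p => w p * (starRingEnd ℂ) (lap w p)) disk :=
    integrableOn_disk (hw.continuous.mul (Complex.continuous_conj.comp hLw.continuous))
  rw [integral_add (int_LcL.const_mul _) (int_AcL.const_mul _), integral_const_mul,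
    integral_const_mul, integral_const_mul] at hstep3
  rw [integral_sub int_wcL (int_LcL.const_mul _), integral_const_mul] at hstep3
  have hA : ∫ p in disk, w p * (starRingEnd ℂ) (lap w p) = -((Nxw:ℂ)) - (Nyw:ℂ) := by
    have e : (fun p => w p * (starRingEnd ℂ) (lap w p))
        = fun p => lap (fun q => (starRingEnd ℂ) (w q)) p * w p := by
      funext p; rw [lap_conj hw p]; ring
    rw [e, green (contDiff_conj hw) hw (fun p hp => (hbc p hp).1)]
    have e2 : (fun p => pdx (fun q => (starRingEnd ℂ) (w q)) p * pdx w p)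
        = fun p => pdx w p * (starRingEnd ℂ) (pdx w p) := by
      funext p; rw [pdx_conj hw p]; ring
    have e3 : (fun p => pdy (fun q => (starRingEnd ℂ) (w q)) p * pdy w p)
        = fun p => pdy w p * (starRingEnd ℂ) (pdy w p) := by
      funext p; rw [pdy_conj hw p]; ring
    rw [e2, e3, nrm_eq, nrm_eq]
  rw [hA, nrm_eq] at hstep3
  -- hstep3 : (1/R) * ↑N2w + R * X = β * ((-(↑Nxw) - ↑Nyw) - ε * ↑N2w)
  -- ## Equation (II) : eq2 against conj ψ
  have hstep2 : ∫ p in disk, ((1/(R:ℂ)) * (lap (lap ψ) p * (starRingEnd ℂ) (ψ p))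
        - ((ε:ℂ) * (R:ℂ)) * (lap (azim w) p * (starRingEnd ℂ) (ψ p)))
      = ∫ p in disk, β * (lap ψ p * (starRingEnd ℂ) (ψ p)
        - (ε:ℂ) * (lap (lap ψ) p * (starRingEnd ℂ) (ψ p))) := by
    apply setIntegral_congr_fun isOpen_disk.measurableSet
    intro p hp
    have h := heq2 p hp
    calc (1/(R:ℂ)) * (lap (lap ψ) p * (starRingEnd ℂ) (ψ p))
          - ((ε:ℂ) * (R:ℂ)) * (lap (azim w) p * (starRingEnd ℂ) (ψ p))
        = ((1/(R:ℂ)) * lap (lap ψ) p - (ε:ℂ) * (R:ℂ) * lap (azim w) p)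
            * (starRingEnd ℂ) (ψ p) := by ring
      _ = (β * (lap ψ p - (ε:ℂ) * lap (lap ψ) p)) * (starRingEnd ℂ) (ψ p) := by rw [h]
      _ = β * (lap ψ p * (starRingEnd ℂ) (ψ p)
          - (ε:ℂ) * (lap (lap ψ) p * (starRingEnd ℂ) (ψ p))) := by ring
  have hLLψ : ContDiff ℝ (⊤:ℕ∞) (lap (lap ψ)) := contDiff_lap hLψ
  have int_LLcψ : IntegrableOn (fun p => lap (lap ψ) p * (starRingEnd ℂ) (ψ p)) disk :=
    integrableOn_disk (hLLψ.continuous.mul (Complex.continuous_conj.comp hψ.continuous))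
  have int_Lacψ : IntegrableOn (fun p => lap (azim w) p * (starRingEnd ℂ) (ψ p)) disk :=
    integrableOn_disk ((contDiff_lap (contDiff_azim hw)).continuous.mul
      (Complex.continuous_conj.comp hψ.continuous))
  have int_Lcψ : IntegrableOn (fun p => lap ψ p * (starRingEnd ℂ) (ψ p)) disk :=
    integrableOn_disk (hLψ.continuous.mul (Complex.continuous_conj.comp hψ.continuous))
  rw [integral_sub (int_LLcψ.const_mul _) (int_Lacψ.const_mul _), integral_const_mul,
    integral_const_mul, integral_const_mul] at hstep2
  rw [integral_sub int_Lcψ (int_LLcψ.const_mul _), integral_const_mul] at hstep2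
  -- D term
  have hcψ : ContDiff ℝ (⊤:ℕ∞) (fun q => (starRingEnd ℂ) (ψ q)) := contDiff_conj hψ
  have hD : ∫ p in disk, lap (lap ψ) p * (starRingEnd ℂ) (ψ p) = ((N2ψ:ℝ):ℂ) := by
    rw [show (fun p => lap (lap ψ) p * (starRingEnd ℂ) (ψ p))
        = fun p => lap (lap ψ) p * (fun q => (starRingEnd ℂ) (ψ q)) p from rfl]
    rw [green hLψ hcψ (fun p hp => by simp [(hbc p hp).2.1])]
    have hx := ibp_x hLψ (contDiff_pdx hcψ)
      (fun p hp => by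
        have : pdx (fun q => (starRingEnd ℂ) (ψ q)) p = 0 := by
          rw [pdx_conj hψ p, (hbc p hp).2.2.1, map_zero]
        rw [this, mul_zero])
    have hy := ibp_y hLψ (contDiff_pdy hcψ)
      (fun p hp => by
        have : pdy (fun q => (starRingEnd ℂ) (ψ q)) p = 0 := by
          rw [pdy_conj hψ p, (hbc p hp).2.2.2, map_zero]
        rw [this, mul_zero])
    rw [hx, hy, neg_neg, sub_neg_eq_add]
    have int1 : IntegrableOn
        (fun p => lap ψ p * pdx (pdx (fun q => (starRingEnd ℂ) (ψ q))) p) disk :=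
      integrableOn_disk (hLψ.continuous.mul (contDiff_pdx (contDiff_pdx hcψ)).continuous)
    have int2 : IntegrableOn
        (fun p => lap ψ p * pdy (pdy (fun q => (starRingEnd ℂ) (ψ q))) p) disk :=
      integrableOn_disk (hLψ.continuous.mul (contDiff_pdy (contDiff_pdy hcψ)).continuous)
    rw [← integral_add int1 int2]
    have e : (fun p => lap ψ p * pdx (pdx (fun q => (starRingEnd ℂ) (ψ q))) p
        + lap ψ p * pdy (pdy (fun q => (starRingEnd ℂ) (ψ q))) p)
        = fun p => lap ψ p * (starRingEnd ℂ) (lap ψ p) := by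
      funext p
      have : pdx (pdx (fun q => (starRingEnd ℂ) (ψ q))) p
          + pdy (pdy (fun q => (starRingEnd ℂ) (ψ q))) p = (starRingEnd ℂ) (lap ψ p) :=
        lap_conj hψ p
      calc _ = lap ψ p * (pdx (pdx (fun q => (starRingEnd ℂ) (ψ q))) p
          + pdy (pdy (fun q => (starRingEnd ℂ) (ψ q))) p) := by ring
        _ = _ := by rw [this]
    rw [e, nrm_eq]
  -- E term
  have hE : ∫ p in disk, lap (azim w) p * (starRingEnd ℂ) (ψ p) = -((starRingEnd ℂ) X) := by
    have e : (fun p => lap (azim w) p * (starRingEnd ℂ) (ψ p))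
        = fun p => azim (lap w) p * (fun q => (starRingEnd ℂ) (ψ q)) p :=
      funext fun p => by rw [lap_azim hw p]
    rw [e, ibp_azim hLw hcψ]
    have e2 : (fun p => lap w p * azim (fun q => (starRingEnd ℂ) (ψ q)) p)
        = fun p => (starRingEnd ℂ) (azim ψ p * (starRingEnd ℂ) (lap w p)) := by
      funext p
      rw [azim_conj hψ p, map_mul, Complex.conj_conj]
      ring
    rw [e2, integral_conj]
  -- F term
  have hF : ∫ p in disk, lap ψ p * (starRingEnd ℂ) (ψ p) = -((Nxψ:ℂ)) - (Nyψ:ℂ) := by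
    rw [show (fun p => lap ψ p * (starRingEnd ℂ) (ψ p))
        = fun p => lap ψ p * (fun q => (starRingEnd ℂ) (ψ q)) p from rfl]
    rw [green hψ hcψ (fun p hp => by simp [(hbc p hp).2.1])]
    have e2 : (fun p => pdx ψ p * pdx (fun q => (starRingEnd ℂ) (ψ q)) p)
        = fun p => pdx ψ p * (starRingEnd ℂ) (pdx ψ p) := by
      funext p; rw [pdx_conj hψ p]
    have e3 : (fun p => pdy ψ p * pdy (fun q => (starRingEnd ℂ) (ψ q)) p)
        = fun p => pdy ψ p * (starRingEnd ℂ) (pdy ψ p) := by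
      funext p; rw [pdy_conj hψ p]
    rw [e2, e3, nrm_eq, nrm_eq]
  rw [hD, hE, hF] at hstep2
  -- ## take imaginary parts
  have hc1 : (-((Nxw:ℂ)) - (Nyw:ℂ) - (ε:ℂ) * ((N2w:ℝ):ℂ)) = (((-Nxw - Nyw - ε*N2w : ℝ)):ℂ) := by
    push_cast; ring
  have hc2 : (-((Nxψ:ℂ)) - (Nyψ:ℂ) - (ε:ℂ) * ((N2ψ:ℝ):ℂ)) = (((-Nxψ - Nyψ - ε*N2ψ : ℝ)):ℂ) := by
    push_cast; ring
  rw [hc1] at hstep3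
  rw [hc2] at hstep2
  have hre1 : (1/(R:ℂ)) = (((1/R : ℝ)):ℂ) := by push_cast; ring
  rw [hre1] at hstep3 hstep2
  have him3 := congrArg Complex.im hstep3
  have him2 := congrArg Complex.im hstep2
  simp only [Complex.add_im, Complex.sub_im, Complex.mul_im, Complex.mul_re,
    Complex.ofReal_re, Complex.ofReal_im, Complex.conj_re, Complex.conj_im, zero_mul,
    mul_zero, add_zero, zero_add, sub_zero, zero_sub, neg_im, neg_re, neg_zero,
    neg_neg] at him3 him2
  rw [← hX] at him3
  -- him3 : R * X.im = β.im * (-Nxw - Nyw - ε*N2w)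
  -- him2 : -(ε*R * X.im) = β.im * (-Nxψ - Nyψ - ε*N2ψ)  (sign as printed)
  have hkey : β.im * ((-Nxψ - Nyψ - ε*N2ψ) + ε * (-Nxw - Nyw - ε*N2w)) = 0 := by
    linear_combination -him2 - ε * him3
  have hcoef : (-Nxψ - Nyψ - ε*N2ψ) + ε * (-Nxw - Nyw - ε*N2w) = 0 := by
    rcases mul_eq_zero.mp hkey with h | h
    · exact absurd h hβ
    · exact h
  clear_value N2w Nxw Nyw Nxψ Nyψ N2ψ X
  have h1 : (0:ℝ) ≤ Nxw := hNxw ▸ nrm_nonneg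
  have h2 : (0:ℝ) ≤ Nyw := hNyw ▸ nrm_nonneg
  have h3 : (0:ℝ) ≤ N2w := hN2w ▸ nrm_nonneg
  have h4 : (0:ℝ) ≤ Nxψ := hNxψ ▸ nrm_nonneg
  have h5 : (0:ℝ) ≤ Nyψ := hNyψ ▸ nrm_nonneg
  have h6 : (0:ℝ) ≤ N2ψ := hN2ψ ▸ nrm_nonneg
  have hints1 : 0 ≤ ε * Nxw := mul_nonneg hε.le h1
  have hints2 : 0 ≤ ε * Nyw := mul_nonneg hε.le h2
  have hints3 : 0 ≤ ε * (ε * N2w) := mul_nonneg hε.le (mul_nonneg hε.le h3)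
  have hints4 : 0 ≤ ε * N2ψ := mul_nonneg hε.le h6
  have hsum : Nxψ + Nyψ + ε * N2ψ + ε * Nxw + ε * Nyw + ε * (ε * N2w) = 0 := by
    linear_combination -hcoef
  have hNxψ0 : Nxψ = 0 := le_antisymm (by linarith) h4
  have hNyψ0 : Nyψ = 0 := le_antisymm (by linarith) h5
  have hN2ψ0 : N2ψ = 0 := by
    have : ε * N2ψ = 0 := le_antisymm (by linarith) hints4
    exact (mul_eq_zero.mp this).resolve_left hε.ne'
  have hNxw0 : Nxw = 0 := by
    have : ε * Nxw = 0 := le_antisymm (by linarith) hints1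
    exact (mul_eq_zero.mp this).resolve_left hε.ne'
  have hNyw0 : Nyw = 0 := by
    have : ε * Nyw = 0 := le_antisymm (by linarith) hints2
    exact (mul_eq_zero.mp this).resolve_left hε.ne'
  have hN2w0 : N2w = 0 := by
    have h' : ε * (ε * N2w) = 0 := le_antisymm (by linarith) hints3
    have h'' := (mul_eq_zero.mp h').resolve_left hε.ne'
    exact (mul_eq_zero.mp h'').resolve_left hε.ne'
  -- ## pointwise vanishing on the disk
  have hzx : ∀ p ∈ disk, pdx ψ p = 0 :=
    zero_of_nrm_zero (contDiff_pdx hψ).continuous (hNxψ.symm.trans hNxψ0)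
  have hzy : ∀ p ∈ disk, pdy ψ p = 0 :=
    zero_of_nrm_zero (contDiff_pdy hψ).continuous (hNyψ.symm.trans hNyψ0)
  have hzL : ∀ p ∈ disk, lap w p = 0 :=
    zero_of_nrm_zero hLw.continuous (hN2w.symm.trans hN2w0)
  have hβne : β ≠ 0 := fun h => hβ (by rw [h]; rfl)
  have hw0 : ∀ p ∈ disk, w p = 0 := by
    intro p hp
    have h := heq1 p hp
    rw [hzL p hp] at h
    have haz : azim ψ p = 0 := by
      simp [azim, hzx p hp, hzy p hp]
    rw [haz] at h
    simp only [mul_zero, add_zero, zero_add] at h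
    rcases mul_eq_zero.mp h.symm with h' | h'
    · exact absurd h' hβne
    · simpa using h'
  -- ψ is constant on the disk
  have hdψ : Differentiable ℝ ψ := hψ.differentiable (by simp)
  have hconv : Convex ℝ disk := by
    intro p hp q hq a b ha hb hab
    simp only [disk, mem_setOf_eq] at hp hq ⊢
    simp only [Prod.fst_add, Prod.snd_add, Prod.smul_fst, Prod.smul_snd, smul_eq_mul]
    have hb' : b = 1 - a := by linarith
    subst hb'
    nlinarith [mul_nonneg (mul_nonneg ha (by linarith : (0:ℝ) ≤ 1 - a)) (sq_nonneg (p.1 - q.1)),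
      mul_nonneg (mul_nonneg ha (by linarith : (0:ℝ) ≤ 1 - a)) (sq_nonneg (p.2 - q.2)),
      mul_le_mul_of_nonneg_left hp.le ha,
      mul_le_mul_of_nonneg_left hq.le (by linarith : (0:ℝ) ≤ 1 - a)]
  have hfz : ∀ p ∈ disk, fderivWithin ℝ ψ disk p = 0 := by
    intro p hp
    rw [fderivWithin_of_isOpen isOpen_disk hp]
    apply ContinuousLinearMap.ext
    intro v
    have hv : v = v.1 • (((1:ℝ),(0:ℝ)) : ℝ × ℝ) + v.2 • (((0:ℝ),(1:ℝ)) : ℝ × ℝ) := by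
      simp [Prod.ext_iff]
    rw [hv, map_add, _root_.map_smul, _root_.map_smul, ← pdx_eq_fderiv hdψ p,
      ← pdy_eq_fderiv hdψ p, hzx p hp, hzy p hp]
    simp
  have hconst : ∀ p ∈ disk, ∀ q ∈ disk, ψ p = ψ q := fun p hp q hq =>
    hconv.is_const_of_fderivWithin_eq_zero hdψ.differentiableOn hfz hp hq
  have hψ0 : ∀ p ∈ disk, ψ p = 0 := by
    intro p hp
    have hT1 : Filter.Tendsto (fun t:ℝ => ψ (t,0)) (nhdsWithin 1 (Iio 1))
        (nhds (ψ (1,0))) :=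
      ((hψ.continuous.comp (continuous_id.prodMk continuous_const)).tendsto 1).mono_left
        nhdsWithin_le_nhds
    have hmem : Ioo (0:ℝ) 1 ∈ nhdsWithin 1 (Iio 1) := by
      rw [mem_nhdsWithin]
      exact ⟨Ioi 0, isOpen_Ioi, by norm_num, fun t ht => ⟨ht.1, ht.2⟩⟩
    have hev : ∀ᶠ t in nhdsWithin 1 (Iio 1), ψ (t,0) = ψ p := by
      filter_upwards [hmem] with t ht
      exact hconst ((t,0) : ℝ × ℝ) (by simp only [disk, mem_setOf_eq]; nlinarith [ht.1, ht.2]) p hp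
    have hT2 : Filter.Tendsto (fun t:ℝ => ψ (t,0)) (nhdsWithin 1 (Iio 1)) (nhds (ψ p)) :=
      Filter.Tendsto.congr' (Filter.EventuallyEq.symm hev) tendsto_const_nhds
    have huniq : ψ p = ψ ((1:ℝ),(0:ℝ)) := tendsto_nhds_unique hT2 hT1
    rw [huniq]
    exact (hbc ((1:ℝ),(0:ℝ)) (by simp [bdry])).2.1
  exact hnz (fun p hp => ⟨hw0 p hp, hψ0 p hp⟩)
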